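/- Let H be a real Hilbert space and K₁, …, K_N ∈ H, and define the evaluation operator P : H → ℝ^N by P f = (⟪f, K₁⟫, …, ⟪f, K_N⟫), where ℝ^N carries the Euclidean (ℓ²) norm. Then P is a bounded linear operator and its operator norm satisfies ‖P‖ ≤ (max_{j} Σ_{i=1}^N |G_{ij}|)^{1/2}, where G_{ij} = ⟪K_i, K_j⟫ is the Gram matrix. -/

import Mathlib

theorem stmt_13 {H : Type*} [NormedAddCommGroup H] [InnerProductSpace ℝ H] [CompleteSpace H]
    (N : ℕ) [NeZero N] (K : Fin N → H) :
    ∃ P : H →L[ℝ] EuclideanSpace ℝ (Fin N),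
      (∀ (f : H) (i : Fin N), P f i = (inner ℝ f (K i) : ℝ)) ∧
      ‖P‖ ≤ Real.sqrt (⨆ j : Fin N, ∑ i : Fin N, |(inner ℝ (K i) (K j) : ℝ)|) := by
  classical
  set S : ℝ := ⨆ j : Fin N, ∑ i : Fin N, |(inner ℝ (K i) (K j) : ℝ)| with hSdef
  have hbdd : BddAbove (Set.range fun j : Fin N => ∑ i : Fin N, |(inner ℝ (K i) (K j) : ℝ)|) :=
    (Set.finite_range _).bddAbove
  have hle : ∀ j : Fin N, ∑ i : Fin N, |(inner ℝ (K i) (K j) : ℝ)| ≤ S := fun j => le_ciSup hbdd j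
  have hS0 : (0:ℝ) ≤ S :=
    le_trans (Finset.sum_nonneg fun i _ => abs_nonneg _)
      (hle ⟨0, Nat.pos_of_ne_zero (NeZero.ne N)⟩)
  have hrow : ∀ i : Fin N, ∑ j : Fin N, |(inner ℝ (K i) (K j) : ℝ)| ≤ S := by
    intro i
    calc ∑ j : Fin N, |(inner ℝ (K i) (K j) : ℝ)|
        = ∑ j : Fin N, |(inner ℝ (K j) (K i) : ℝ)| :=
          Finset.sum_congr rfl fun j _ => by rw [real_inner_comm]
      _ ≤ S := hle i
  let L : H →ₗ[ℝ] EuclideanSpace ℝ (Fin N) :=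
    { toFun := fun f => WithLp.toLp 2 (fun i => (inner ℝ f (K i) : ℝ))
      map_add' := by intro x y; ext i; simp [inner_add_left]
      map_smul' := by intro c x; ext i; simp [inner_smul_left] }
  have key : ∀ f : H, ‖L f‖ ≤ Real.sqrt S * ‖f‖ := by
    intro f
    set a : Fin N → ℝ := fun i => (inner ℝ f (K i) : ℝ) with ha
    set Q : ℝ := ∑ i : Fin N, a i ^ 2 with hQdef
    have hQ0 : (0:ℝ) ≤ Q := Finset.sum_nonneg fun i _ => sq_nonneg _
    have hnorm : ‖L f‖ = Real.sqrt Q := by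
      rw [EuclideanSpace.norm_eq]
      congr 1
      refine Finset.sum_congr rfl fun i _ => ?_
      rw [Real.norm_eq_abs, sq_abs]
      rfl
    set g : H := ∑ i : Fin N, a i • K i with hg
    have h1 : Q = (inner ℝ f g : ℝ) := by
      rw [hg, inner_sum]
      refine Finset.sum_congr rfl fun i _ => ?_
      rw [real_inner_smul_right, sq]
    have hgg : ‖g‖ ^ 2 = ∑ i : Fin N, ∑ j : Fin N, a i * a j * (inner ℝ (K i) (K j) : ℝ) := by
      rw [← real_inner_self_eq_norm_sq, hg, sum_inner]
      refine Finset.sum_congr rfl fun i _ => ?_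
      rw [real_inner_smul_left, inner_sum, Finset.mul_sum]
      refine Finset.sum_congr rfl fun j _ => ?_
      rw [real_inner_smul_right]; ring
    have hg2 : ‖g‖ ^ 2 ≤ S * Q := by
      rw [hgg]
      have step1 : ∑ i : Fin N, ∑ j : Fin N, a i * a j * (inner ℝ (K i) (K j) : ℝ)
          ≤ ∑ i : Fin N, ∑ j : Fin N,
              (a i ^ 2 / 2 * |(inner ℝ (K i) (K j) : ℝ)| + a j ^ 2 / 2 * |(inner ℝ (K i) (K j) : ℝ)|) := by
        refine Finset.sum_le_sum fun i _ => Finset.sum_le_sum fun j _ => ?_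
        have h1 : a i * a j * (inner ℝ (K i) (K j) : ℝ)
            ≤ |a i| * |a j| * |(inner ℝ (K i) (K j) : ℝ)| := by
          calc a i * a j * (inner ℝ (K i) (K j) : ℝ)
              ≤ |a i * a j * (inner ℝ (K i) (K j) : ℝ)| := le_abs_self _
            _ = |a i| * |a j| * |(inner ℝ (K i) (K j) : ℝ)| := by rw [abs_mul, abs_mul]
        refine h1.trans ?_
        have h2 : |a i| * |a j| ≤ (a i ^ 2 + a j ^ 2) / 2 := by
          nlinarith [sq_nonneg (|a i| - |a j|), sq_abs (a i), sq_abs (a j)]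
        calc |a i| * |a j| * |(inner ℝ (K i) (K j) : ℝ)|
            ≤ (a i ^ 2 + a j ^ 2) / 2 * |(inner ℝ (K i) (K j) : ℝ)| :=
              mul_le_mul_of_nonneg_right h2 (abs_nonneg _)
          _ = a i ^ 2 / 2 * |(inner ℝ (K i) (K j) : ℝ)| + a j ^ 2 / 2 * |(inner ℝ (K i) (K j) : ℝ)| := by
              ring
      refine step1.trans ?_
      have split : ∑ i : Fin N, ∑ j : Fin N,
            (a i ^ 2 / 2 * |(inner ℝ (K i) (K j) : ℝ)| + a j ^ 2 / 2 * |(inner ℝ (K i) (K j) : ℝ)|)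
          = (∑ i : Fin N, a i ^ 2 / 2 * ∑ j : Fin N, |(inner ℝ (K i) (K j) : ℝ)|)
            + ∑ j : Fin N, a j ^ 2 / 2 * ∑ i : Fin N, |(inner ℝ (K i) (K j) : ℝ)| := by
        simp only [Finset.sum_add_distrib]
        congr 1
        · exact Finset.sum_congr rfl fun i _ => (Finset.mul_sum _ _ _).symm
        · rw [Finset.sum_comm]
          exact Finset.sum_congr rfl fun j _ => (Finset.mul_sum _ _ _).symm
      rw [split]
      have b1 : ∑ i : Fin N, a i ^ 2 / 2 * ∑ j : Fin N, |(inner ℝ (K i) (K j) : ℝ)|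
          ≤ ∑ i : Fin N, a i ^ 2 / 2 * S :=
        Finset.sum_le_sum fun i _ =>
          mul_le_mul_of_nonneg_left (hrow i) (by positivity)
      have b2 : ∑ j : Fin N, a j ^ 2 / 2 * ∑ i : Fin N, |(inner ℝ (K i) (K j) : ℝ)|
          ≤ ∑ j : Fin N, a j ^ 2 / 2 * S :=
        Finset.sum_le_sum fun j _ =>
          mul_le_mul_of_nonneg_left (hle j) (by positivity)
      have : ∑ i : Fin N, a i ^ 2 / 2 * S = S * Q / 2 := by
        rw [← Finset.sum_mul, hQdef, ← Finset.sum_div]; ring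
      linarith [b1, b2, this]
    have hgn : ‖g‖ ≤ Real.sqrt (S * Q) := by
      have := Real.sqrt_le_sqrt hg2
      rwa [Real.sqrt_sq (norm_nonneg g)] at this
    have hQle : Q ≤ ‖f‖ * (Real.sqrt S * Real.sqrt Q) := by
      calc Q = (inner ℝ f g : ℝ) := h1
        _ ≤ ‖f‖ * ‖g‖ := real_inner_le_norm f g
        _ ≤ ‖f‖ * Real.sqrt (S * Q) := mul_le_mul_of_nonneg_left hgn (norm_nonneg f)
        _ = ‖f‖ * (Real.sqrt S * Real.sqrt Q) := by rw [Real.sqrt_mul hS0]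
    rw [hnorm]
    rcases eq_or_lt_of_le hQ0 with hQz | hQpos
    · rw [← hQz, Real.sqrt_zero]
      positivity
    · have hsq : (0:ℝ) < Real.sqrt Q := Real.sqrt_pos.mpr hQpos
      have : Real.sqrt Q * Real.sqrt Q ≤ (Real.sqrt S * ‖f‖) * Real.sqrt Q := by
        rw [Real.mul_self_sqrt hQ0]
        calc Q ≤ ‖f‖ * (Real.sqrt S * Real.sqrt Q) := hQle
          _ = Real.sqrt S * ‖f‖ * Real.sqrt Q := by ring
      exact le_of_mul_le_mul_right this hsq
  refine ⟨L.mkContinuous (Real.sqrt S) key, fun f i => rfl, ?_⟩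
  exact L.mkContinuous_norm_le (Real.sqrt_nonneg S) key
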